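/- arXiv:1103.1935 — 3 statements merged into one kernel-verified Lean document; each statement's English description precedes it below -/
import Mathlib

section
/- For every f in the algebra AP of almost periodic functions (the uniform closure on ℝ of finite linear combinations of e_λ(x) = e^{iλx}, λ ∈ ℝ), the mean value M(f) = lim_{T→∞} (1/(2T)) ∫_{-T}^{T} f(t) dt exists. -/
noncomputable section
open Complex MeasureTheory Filter Topology

/-- Almost periodic polynomials: finite linear combinations of `x ↦ e^{iλx}`. -/
def IsAPPoly (f : ℝ → ℂ) : Prop :=
  ∃ (s : Finset ℝ) (c : ℝ → ℂ),
    ∀ x : ℝ, f x = ∑ l ∈ s, c l * Complex.exp (Complex.I * l * x)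

/-- The algebra `AP`: uniform limits on `ℝ` of almost periodic polynomials. -/
def MemAP (f : ℝ → ℂ) : Prop :=
  ∀ ε : ℝ, 0 < ε → ∃ g : ℝ → ℂ, IsAPPoly g ∧ ∀ x : ℝ, ‖f x - g x‖ ≤ ε

/-- `m` is the Bohr mean value of `f`. -/
def HasMeanValue (f : ℝ → ℂ) (m : ℂ) : Prop :=
  Tendsto (fun T : ℝ => ((2 * T : ℝ) : ℂ)⁻¹ * ∫ t in (-T)..T, f t) atTop (nhds m)

lemma expcont (l : ℝ) : Continuous (fun t : ℝ => Complex.exp (Complex.I * l * t)) :=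
  (continuous_const.mul Complex.continuous_ofReal).cexp

lemma mean_exp (l : ℝ) :
    Tendsto (fun T : ℝ => ((2*T:ℝ):ℂ)⁻¹ * ∫ t in (-T : ℝ)..T, Complex.exp (Complex.I * l * t))
      atTop (nhds (if l = 0 then 1 else 0)) := by
  rcases eq_or_ne l 0 with h | h
  · subst h
    rw [if_pos rfl]
    apply Tendsto.congr' ?_ tendsto_const_nhds
    filter_upwards [eventually_gt_atTop (0:ℝ)] with T hT
    have h1 : (fun t : ℝ => Complex.exp (Complex.I * (0:ℝ) * t)) = fun _ => (1:ℂ) := by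
      funext t; simp
    rw [h1, intervalIntegral.integral_const, Complex.real_smul, mul_one,
      show ((T - -T:ℝ):ℂ) = ((2*T:ℝ):ℂ) by push_cast; ring,
      inv_mul_cancel₀ (by exact_mod_cast (by positivity : (2*T:ℝ) ≠ 0))]
  · have hc : (Complex.I * l : ℂ) ≠ 0 :=
      mul_ne_zero Complex.I_ne_zero (by exact_mod_cast h)
    rw [if_neg h]
    apply squeeze_zero_norm' (a := fun T : ℝ => (2*T)⁻¹ * (2/|l|))
    · filter_upwards [eventually_gt_atTop (0:ℝ)] with T hT
      have hint : (∫ t in (-T : ℝ)..T, Complex.exp (Complex.I * l * t))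
          = (Complex.exp (Complex.I * l * T) - Complex.exp (Complex.I * l * (-T))) / (Complex.I * l) := by
        simpa [mul_assoc] using integral_exp_mul_complex (a := -T) (b := T) hc
      rw [norm_mul, hint]
      have hA : ‖Complex.exp (Complex.I * l * T)‖ = 1 := by
        rw [Complex.norm_exp]; simp
      have hB : ‖Complex.exp (Complex.I * l * (-T:ℂ))‖ = 1 := by
        rw [Complex.norm_exp]; simp
      have hIl : ‖(Complex.I * l : ℂ)‖ = |l| := by
        rw [norm_mul]; simp [Complex.norm_real]
      have h1 : ‖(Complex.exp (Complex.I * l * T) - Complex.exp (Complex.I * l * (-T))) / (Complex.I * l)‖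
          ≤ 2 / |l| := by
        rw [norm_div, hIl]
        gcongr
        calc ‖Complex.exp (Complex.I * l * T) - Complex.exp (Complex.I * l * (-T))‖
            ≤ ‖Complex.exp (Complex.I * l * T)‖ + ‖Complex.exp (Complex.I * l * (-T))‖ := norm_sub_le _ _
          _ = 2 := by rw [hA, hB]; norm_num
      have h2 : ‖(((2*T:ℝ):ℂ))⁻¹‖ = (2*T)⁻¹ := by
        rw [norm_inv, Complex.norm_real, Real.norm_eq_abs, abs_of_pos (by positivity)]
      rw [h2]
      exact mul_le_mul_of_nonneg_left h1 (by positivity)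
    · have h2 : Tendsto (fun T:ℝ => 2*T) atTop atTop :=
        Tendsto.const_mul_atTop two_pos tendsto_id
      simpa using (tendsto_inv_atTop_zero.comp h2).mul_const (2/|l|)

lemma apPoly_continuous {g : ℝ → ℂ} (hg : IsAPPoly g) : Continuous g := by
  obtain ⟨s, c, hc⟩ := hg
  exact (continuous_finset_sum s fun l _ => continuous_const.mul (expcont l)).congr
    (fun x => (hc x).symm)

lemma poly_mean {g : ℝ → ℂ} (hg : IsAPPoly g) :
    ∃ M : ℂ, Tendsto (fun T : ℝ => ((2*T:ℝ):ℂ)⁻¹ * ∫ t in (-T : ℝ)..T, g t) atTop (nhds M) := by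
  obtain ⟨s, c, hc⟩ := hg
  refine ⟨∑ l ∈ s, c l * (if l = 0 then 1 else 0), ?_⟩
  have key : ∀ T : ℝ, ((2*T:ℝ):ℂ)⁻¹ * ∫ t in (-T : ℝ)..T, g t
      = ∑ l ∈ s, c l * (((2*T:ℝ):ℂ)⁻¹ * ∫ t in (-T : ℝ)..T, Complex.exp (Complex.I * l * t)) := by
    intro T
    rw [intervalIntegral.integral_congr
      (g := fun t => ∑ l ∈ s, c l * Complex.exp (Complex.I * l * t)) (fun t _ => hc t)]
    rw [intervalIntegral.integral_finset_sum (f := fun l t => c l * Complex.exp (Complex.I * l * t))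
      (fun l _ => (continuous_const.mul (expcont l)).intervalIntegrable _ _)]
    rw [Finset.mul_sum]
    refine Finset.sum_congr rfl fun l _ => ?_
    rw [intervalIntegral.integral_const_mul]
    ring
  simp only [key]
  exact tendsto_finset_sum _ fun l _ => (mean_exp l).const_mul _

lemma diff_bound {f g : ℝ → ℂ} (hfc : Continuous f) (hgc : Continuous g) {ε T : ℝ}
    (hT : 0 < T) (h : ∀ x, ‖f x - g x‖ ≤ ε) :
    dist (((2*T:ℝ):ℂ)⁻¹ * ∫ t in (-T:ℝ)..T, f t) (((2*T:ℝ):ℂ)⁻¹ * ∫ t in (-T:ℝ)..T, g t) ≤ ε := by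
  have h' : ∀ x, ‖f x - g x‖ ≤ ε := fun x => h x
  rw [dist_eq_norm, ← mul_sub,
    ← intervalIntegral.integral_sub (hfc.intervalIntegrable _ _) (hgc.intervalIntegrable _ _),
    norm_mul]
  have h2 : ‖(((2*T:ℝ):ℂ))⁻¹‖ = (2*T)⁻¹ := by
    rw [norm_inv, Complex.norm_real, Real.norm_eq_abs, abs_of_pos (by positivity)]
  have h3 : ‖∫ t in (-T:ℝ)..T, (f t - g t)‖ ≤ ε * |T - (-T)| :=
    intervalIntegral.norm_integral_le_of_norm_le_const (fun x _ => h' x)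
  rw [h2]
  have h4 : |T - (-T)| = 2*T := by rw [abs_of_pos (by linarith)]; ring
  rw [h4] at h3
  calc (2*T)⁻¹ * ‖∫ t in (-T:ℝ)..T, (f t - g t)‖ ≤ (2*T)⁻¹ * (ε * (2*T)) :=
        mul_le_mul_of_nonneg_left h3 (by positivity)
    _ = ε := by field_simp

/-- Every almost periodic function has a mean value. -/
theorem stmt7 (f : ℝ → ℂ) (hf : MemAP f) : ∃ m : ℂ, HasMeanValue f m := by
  have hg : ∀ n : ℕ, ∃ g, IsAPPoly g ∧ ∀ x, ‖f x - g x‖ ≤ 1/(n+1) :=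
    fun n => hf _ (by positivity)
  choose g hgP hgb using hg
  have hgc : ∀ n, Continuous (g n) := fun n => apPoly_continuous (hgP n)
  have hfc : Continuous f := by
    have hu : TendstoUniformly (fun n x => g n x) f atTop := by
      rw [Metric.tendstoUniformly_iff]
      intro ε hε
      obtain ⟨n, hn⟩ := exists_nat_one_div_lt hε
      filter_upwards [eventually_ge_atTop n] with k hk x
      calc dist (f x) (g k x) = ‖f x - g k x‖ := Complex.dist_eq _ _
        _ ≤ 1/(k+1) := hgb k x
        _ ≤ 1/(n+1) := by
            apply one_div_le_one_div_of_le (by positivity)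
            have : (n:ℝ) ≤ k := Nat.cast_le.mpr hk
            linarith
        _ < ε := hn
    exact hu.continuous (Eventually.of_forall hgc).frequently
  choose M hM using fun n => poly_mean (hgP n)
  set A : ℝ → (ℝ → ℂ) → ℂ := fun T h => ((2*T:ℝ):ℂ)⁻¹ * ∫ t in (-T:ℝ)..T, h t with hA
  have key : ∀ (n : ℕ) (T : ℝ), 0 < T → dist (A T f) (A T (g n)) ≤ 1/(n+1) :=
    fun n T hT => diff_bound hfc (hgc n) hT (hgb n)
  have hMM : ∀ n k : ℕ, dist (M n) (M k) ≤ 1/(n+1) + 1/(k+1) := by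
    intro n k
    have htend : Tendsto (fun T : ℝ => dist (A T (g n)) (A T (g k))) atTop
        (nhds (dist (M n) (M k))) := (hM n).dist (hM k)
    apply le_of_tendsto htend
    filter_upwards [eventually_gt_atTop (0:ℝ)] with T hT
    calc dist (A T (g n)) (A T (g k))
        ≤ dist (A T (g n)) (A T f) + dist (A T f) (A T (g k)) := dist_triangle _ _ _
      _ ≤ 1/(n+1) + 1/(k+1) := add_le_add (by rw [dist_comm]; exact key n T hT) (key k T hT)
  have hcauchy : CauchySeq M := by
    rw [Metric.cauchySeq_iff']
    intro ε hε
    obtain ⟨N, hN⟩ := exists_nat_one_div_lt (half_pos hε)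
    refine ⟨N, fun n hn => ?_⟩
    calc dist (M n) (M N) ≤ 1/(n+1) + 1/(N+1) := hMM n N
      _ ≤ 1/(N+1) + 1/(N+1) := by
          have : (1:ℝ)/(n+1) ≤ 1/(N+1) := by
            apply one_div_le_one_div_of_le (by positivity)
            have : (N:ℝ) ≤ n := Nat.cast_le.mpr hn
            linarith
          linarith
      _ < ε/2 + ε/2 := add_lt_add hN hN
      _ = ε := by ring
  obtain ⟨m, hm⟩ := cauchySeq_tendsto_of_complete hcauchy
  refine ⟨m, ?_⟩
  rw [HasMeanValue, Metric.tendsto_atTop]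
  intro ε hε
  obtain ⟨n₀, hn₀⟩ := exists_nat_one_div_lt (by positivity : (0:ℝ) < ε/3)
  obtain ⟨n₁, hn₁⟩ := (Metric.tendsto_atTop.mp hm) (ε/3) (by positivity)
  set n := max n₀ n₁
  obtain ⟨T₀, hT₀⟩ := (Metric.tendsto_atTop.mp (hM n)) (ε/3) (by positivity)
  refine ⟨max T₀ 1, fun T hT => ?_⟩
  have hTpos : (0:ℝ) < T := lt_of_lt_of_le one_pos (le_trans (le_max_right _ _) hT)
  calc dist (A T f) m ≤ dist (A T f) (A T (g n)) + dist (A T (g n)) (M n) + dist (M n) m :=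
        dist_triangle4 _ _ _ _
    _ < ε/3 + ε/3 + ε/3 := by
        have e1 : dist (A T f) (A T (g n)) ≤ ε/3 := by
          refine (key n T hTpos).trans (le_of_lt (lt_of_le_of_lt ?_ hn₀))
          apply one_div_le_one_div_of_le (by positivity)
          have : (n₀:ℝ) ≤ n := Nat.cast_le.mpr (le_max_left _ _)
          linarith
        have e2 : dist (A T (g n)) (M n) < ε/3 := hT₀ T (le_trans (le_max_left _ _) hT)
        have e3 : dist (M n) m < ε/3 := hn₁ n (le_max_right _ _)
        linarith
    _ = ε := by ring
end
end

section
/- Let N > 1 be an integer, λ > 0, ν, β ≥ 0 with ν + β = λ/N, and let a₊ ∈ H∞⁺, a₋ ∈ H∞⁻ satisfy b₊ := e_{β/(N-1)} a₋ ∈ H∞⁺ and b₋ := e_{-ν/(N-1)} a₊ ∈ H∞⁻. Set g = a₋ e_{-β} + a₊ e_ν. Then the functions φ₁₊ = e_{λ-ν} ∑_{j=0}^{N-1} (-1)^j a₊^{N-1-j} a₋^j e_{-jλ/N} and φ₁₋ = e_{-λ} φ₁₊ satisfy φ₁₊ ∈ H∞⁺ and φ₁₋ ∈ H∞⁻. 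-/
noncomputable section
open Complex MeasureTheory Filter Topology
open scoped ENNReal

/-- Bounded analytic functions on the upper half-plane. -/
def HInfPlus (f : ℂ → ℂ) : Prop :=
  DifferentiableOn ℂ f {z : ℂ | 0 < z.im} ∧
    ∃ C : ℝ, ∀ z : ℂ, 0 < z.im → ‖f z‖ ≤ C

/-- Bounded analytic functions on the lower half-plane. -/
def HInfMinus (f : ℂ → ℂ) : Prop :=
  DifferentiableOn ℂ f {z : ℂ | z.im < 0} ∧
    ∃ C : ℝ, ∀ z : ℂ, z.im < 0 → ‖f z‖ ≤ C

/-- Hardy class `H_p` of the upper half-plane. -/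
def HardyPlus (p : ℝ≥0∞) (f : ℂ → ℂ) : Prop :=
  DifferentiableOn ℂ f {z : ℂ | 0 < z.im} ∧
    ∃ C : ℝ≥0∞, ∀ y : ℝ, 0 < y →
      eLpNorm (fun x : ℝ => f (x + y * Complex.I)) p volume ≤ C

/-- Hardy class `H_p` of the lower half-plane. -/
def HardyMinus (p : ℝ≥0∞) (f : ℂ → ℂ) : Prop :=
  DifferentiableOn ℂ f {z : ℂ | z.im < 0} ∧
    ∃ C : ℝ≥0∞, ∀ y : ℝ, y < 0 →
      eLpNorm (fun x : ℝ => f (x + y * Complex.I)) p volume ≤ C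

/-- A function on `ℝ` is a boundary value of an `H∞⁺` function. -/
def BdryHInfPlus (d : ℝ → ℂ) : Prop := ∃ F : ℂ → ℂ, HInfPlus F ∧ ∀ x : ℝ, F x = d x

/-- A function on `ℝ` is a boundary value of an `H∞⁻` function. -/
def BdryHInfMinus (d : ℝ → ℂ) : Prop := ∃ F : ℂ → ℂ, HInfMinus F ∧ ∀ x : ℝ, F x = d x

/-- `d` is of (strictly) positive type. -/
def PositiveType (d : ℝ → ℂ) : Prop :=
  (BdryHInfPlus d ∨ BdryHInfMinus fun x => (d x)⁻¹) ∧
    ¬ (BdryHInfMinus d ∨ BdryHInfPlus fun x => (d x)⁻¹)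


/-- The entire exponential `z ↦ e^{iμz}`. -/
def eFun (mu : ℝ) : ℂ → ℂ := fun z => Complex.exp (Complex.I * mu * z)

section Helpers

lemma eFun_mul_eFun (a b : ℝ) (z : ℂ) : eFun a z * eFun b z = eFun (a + b) z := by
  rw [eFun, eFun, eFun, ← Complex.exp_add]
  congr 1
  push_cast
  ring

lemma eFun_pow (a : ℝ) (n : ℕ) (z : ℂ) : eFun a z ^ n = eFun ((n : ℝ) * a) z := by
  rw [eFun, eFun, ← Complex.exp_nat_mul]
  congr 1
  push_cast
  ring

lemma eFun_diff (a : ℝ) : Differentiable ℂ (eFun a) := by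
  have : Differentiable ℂ fun z : ℂ => Complex.I * a * z := by fun_prop
  exact this.cexp

lemma eFun_abs (a : ℝ) (z : ℂ) : ‖eFun a z‖ = Real.exp (-(a * z.im)) := by
  rw [eFun, Complex.norm_exp]
  congr 1
  simp [Complex.mul_re, Complex.mul_im]

lemma HInfPlus.mul {f g : ℂ → ℂ} (hf : HInfPlus f) (hg : HInfPlus g) :
    HInfPlus (fun z => f z * g z) := by
  obtain ⟨hfd, Cf, hCf⟩ := hf
  obtain ⟨hgd, Cg, hCg⟩ := hg
  refine ⟨hfd.mul hgd, max Cf 0 * max Cg 0, fun z hz => ?_⟩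
  rw [norm_mul]
  exact mul_le_mul ((hCf z hz).trans (le_max_left _ _))
    ((hCg z hz).trans (le_max_left _ _)) (norm_nonneg _) (le_max_right _ _)

lemma HInfMinus.mul {f g : ℂ → ℂ} (hf : HInfMinus f) (hg : HInfMinus g) :
    HInfMinus (fun z => f z * g z) := by
  obtain ⟨hfd, Cf, hCf⟩ := hf
  obtain ⟨hgd, Cg, hCg⟩ := hg
  refine ⟨hfd.mul hgd, max Cf 0 * max Cg 0, fun z hz => ?_⟩
  rw [norm_mul]
  exact mul_le_mul ((hCf z hz).trans (le_max_left _ _))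
    ((hCg z hz).trans (le_max_left _ _)) (norm_nonneg _) (le_max_right _ _)

lemma HInfPlus.const (c : ℂ) : HInfPlus (fun _ => c) :=
  ⟨differentiableOn_const _, ‖c‖, fun _ _ => le_rfl⟩

lemma HInfMinus.const (c : ℂ) : HInfMinus (fun _ => c) :=
  ⟨differentiableOn_const _, ‖c‖, fun _ _ => le_rfl⟩

lemma HInfPlus.add {f g : ℂ → ℂ} (hf : HInfPlus f) (hg : HInfPlus g) :
    HInfPlus (fun z => f z + g z) := by
  obtain ⟨hfd, Cf, hCf⟩ := hf
  obtain ⟨hgd, Cg, hCg⟩ := hg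
  refine ⟨hfd.add hgd, Cf + Cg, fun z hz => ?_⟩
  exact (norm_add_le _ _).trans (add_le_add (hCf z hz) (hCg z hz))

lemma HInfMinus.add {f g : ℂ → ℂ} (hf : HInfMinus f) (hg : HInfMinus g) :
    HInfMinus (fun z => f z + g z) := by
  obtain ⟨hfd, Cf, hCf⟩ := hf
  obtain ⟨hgd, Cg, hCg⟩ := hg
  refine ⟨hfd.add hgd, Cf + Cg, fun z hz => ?_⟩
  exact (norm_add_le _ _).trans (add_le_add (hCf z hz) (hCg z hz))

lemma HInfPlus.pow {f : ℂ → ℂ} (hf : HInfPlus f) (n : ℕ) :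
    HInfPlus (fun z => f z ^ n) := by
  induction n with
  | zero => simpa using HInfPlus.const 1
  | succ n ih =>
    have := ih.mul hf
    simpa [pow_succ] using this

lemma HInfMinus.pow {f : ℂ → ℂ} (hf : HInfMinus f) (n : ℕ) :
    HInfMinus (fun z => f z ^ n) := by
  induction n with
  | zero => simpa using HInfMinus.const 1
  | succ n ih =>
    have := ih.mul hf
    simpa [pow_succ] using this

lemma HInfPlus.sum {ι : Type*} (s : Finset ι) (F : ι → ℂ → ℂ)
    (h : ∀ i ∈ s, HInfPlus (F i)) : HInfPlus (fun z => ∑ i ∈ s, F i z) := by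
  induction s using Finset.cons_induction with
  | empty => simpa using HInfPlus.const 0
  | cons a s ha ih =>
    simp only [Finset.sum_cons]
    exact (h a (Finset.mem_cons_self _ _)).add (ih fun i hi => h i (Finset.mem_cons_of_mem hi))

lemma HInfMinus.sum {ι : Type*} (s : Finset ι) (F : ι → ℂ → ℂ)
    (h : ∀ i ∈ s, HInfMinus (F i)) : HInfMinus (fun z => ∑ i ∈ s, F i z) := by
  induction s using Finset.cons_induction with
  | empty => simpa using HInfMinus.const 0
  | cons a s ha ih =>
    simp only [Finset.sum_cons]
    exact (h a (Finset.mem_cons_self _ _)).add (ih fun i hi => h i (Finset.mem_cons_of_mem hi))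

lemma eFun_HInfPlus {a : ℝ} (ha : 0 ≤ a) : HInfPlus (eFun a) := by
  refine ⟨(eFun_diff a).differentiableOn, 1, fun z hz => ?_⟩
  rw [eFun_abs]
  refine Real.exp_le_one_iff.mpr ?_
  nlinarith

lemma eFun_HInfMinus {a : ℝ} (ha : a ≤ 0) : HInfMinus (eFun a) := by
  refine ⟨(eFun_diff a).differentiableOn, 1, fun z hz => ?_⟩
  rw [eFun_abs]
  refine Real.exp_le_one_iff.mpr ?_
  nlinarith

end Helpers

/-- Part of Theorem 4.2: the functions `φ₁₊` and `φ₁₋ = e_{-λ} φ₁₊` belong to `H∞⁺`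
and `H∞⁻` respectively. -/
theorem stmt10 (lam nu beta : ℝ) (N : ℕ) (hN : 1 < N) (hlam : 0 < lam)
    (hnu : 0 ≤ nu) (hbeta : 0 ≤ beta) (hsum : nu + beta = lam / N)
    (ap am : ℂ → ℂ) (hap : HInfPlus ap) (ham : HInfMinus am)
    (hbp : HInfPlus fun z => eFun (beta / ((N : ℝ) - 1)) z * am z)
    (hbm : HInfMinus fun z => eFun (-(nu / ((N : ℝ) - 1))) z * ap z) :
    HInfPlus (fun z => eFun (lam - nu) z *
      ∑ j ∈ Finset.range N,
        (-1 : ℂ) ^ j * ap z ^ (N - 1 - j) * am z ^ j * eFun (-((j : ℝ) * lam / N)) z) ∧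
    HInfMinus (fun z => eFun (-lam) z * (eFun (lam - nu) z *
      ∑ j ∈ Finset.range N,
        (-1 : ℂ) ^ j * ap z ^ (N - 1 - j) * am z ^ j * eFun (-((j : ℝ) * lam / N)) z)) := by
  have hN1 : (0:ℝ) < (N:ℝ) - 1 := by
    have : (1:ℝ) < N := by exact_mod_cast hN
    linarith
  have hNpos : (0:ℝ) < N := by positivity
  have hnu' : nu = lam / N - beta := by linarith
  constructor
  · -- upper half-plane part
    have key : (fun z => eFun (lam - nu) z *
        ∑ j ∈ Finset.range N,
          (-1 : ℂ) ^ j * ap z ^ (N - 1 - j) * am z ^ j * eFun (-((j : ℝ) * lam / N)) z) =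
        fun z => ∑ j ∈ Finset.range N,
          (-1 : ℂ) ^ j * (eFun (lam - nu - j * lam / N - j * (beta / ((N:ℝ) - 1))) z *
            (ap z ^ (N - 1 - j) * (eFun (beta / ((N:ℝ) - 1)) z * am z) ^ j)) := by
      funext z
      rw [Finset.mul_sum]
      refine Finset.sum_congr rfl fun j hj => ?_
      rw [mul_pow, eFun_pow]
      have h1 : eFun (lam - nu) z * eFun (-((j : ℝ) * lam / N)) z =
          eFun (lam - nu - j * lam / N - j * (beta / ((N:ℝ) - 1))) z *
            eFun ((j : ℝ) * (beta / ((N:ℝ) - 1))) z := by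
        rw [eFun_mul_eFun, eFun_mul_eFun]
        congr 1
        ring
      linear_combination ((-1 : ℂ) ^ j * ap z ^ (N - 1 - j) * am z ^ j) * h1
    rw [key]
    refine HInfPlus.sum _ _ fun j hj => ?_
    refine (HInfPlus.const _).mul ((eFun_HInfPlus ?_).mul ((hap.pow _).mul (hbp.pow _)))
    have hj' : (j : ℝ) ≤ (N:ℝ) - 1 := by
      have : j + 1 ≤ N := Finset.mem_range.mp hj
      have : ((j:ℝ) + 1) ≤ N := by exact_mod_cast this
      linarith
    have hid : lam - nu - j * lam / N - j * (beta / ((N:ℝ) - 1)) =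
        (((N:ℝ) - 1) - j) * (lam / N + beta / ((N:ℝ) - 1)) := by
      rw [hnu']
      field_simp
      ring
    rw [hid]
    have h2 : (0:ℝ) ≤ lam / N + beta / ((N:ℝ) - 1) := by positivity
    exact mul_nonneg (by linarith) h2
  · -- lower half-plane part
    have key : (fun z => eFun (-lam) z * (eFun (lam - nu) z *
        ∑ j ∈ Finset.range N,
          (-1 : ℂ) ^ j * ap z ^ (N - 1 - j) * am z ^ j * eFun (-((j : ℝ) * lam / N)) z)) =
        fun z => ∑ j ∈ Finset.range N,
          (-1 : ℂ) ^ j * (eFun (-nu - (j:ℝ) * lam / N + ((N - 1 - j : ℕ) : ℝ) * (nu / ((N:ℝ) - 1))) z *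
            ((eFun (-(nu / ((N:ℝ) - 1))) z * ap z) ^ (N - 1 - j) * am z ^ j)) := by
      funext z
      rw [Finset.mul_sum, Finset.mul_sum]
      refine Finset.sum_congr rfl fun j hj => ?_
      rw [mul_pow, eFun_pow]
      have h1 : eFun (-lam) z * (eFun (lam - nu) z * eFun (-((j : ℝ) * lam / N)) z) =
          eFun (-nu - (j:ℝ) * lam / N + ((N - 1 - j : ℕ) : ℝ) * (nu / ((N:ℝ) - 1))) z *
            eFun (((N - 1 - j : ℕ) : ℝ) * -(nu / ((N:ℝ) - 1))) z := by
        rw [eFun_mul_eFun, eFun_mul_eFun, eFun_mul_eFun]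
        congr 1
        ring
      linear_combination ((-1 : ℂ) ^ j * ap z ^ (N - 1 - j) * am z ^ j) * h1
    rw [key]
    refine HInfMinus.sum _ _ fun j hj => ?_
    refine (HInfMinus.const _).mul ((eFun_HInfMinus ?_).mul ((hbm.pow _).mul (ham.pow _)))
    have hk : ((N - 1 - j : ℕ) : ℝ) ≤ (N:ℝ) - 1 := by
      have h3 : (N - 1 - j : ℕ) ≤ N - 1 := Nat.sub_le _ _
      have h4 : ((N - 1 - j : ℕ) : ℝ) ≤ ((N - 1 : ℕ) : ℝ) := by exact_mod_cast h3
      have h5 : ((N - 1 : ℕ) : ℝ) = (N:ℝ) - 1 := by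
        have : 1 ≤ N := le_of_lt hN
        push_cast [this]
        ring
      linarith
    have hnn : (0:ℝ) ≤ nu / ((N:ℝ) - 1) := by positivity
    have h6 : ((N - 1 - j : ℕ) : ℝ) * (nu / ((N:ℝ) - 1)) ≤ ((N:ℝ) - 1) * (nu / ((N:ℝ) - 1)) :=
      mul_le_mul_of_nonneg_right hk hnn
    have h7 : ((N:ℝ) - 1) * (nu / ((N:ℝ) - 1)) = nu := by field_simp
    have h8 : (0:ℝ) ≤ (j:ℝ) * lam / N := by positivity
    linarith
end
end

section
/- Let N > 1, and let a₊, a₋, b₊, b₋, φ₁₊, φ₂₊ be as in the class S_{λ,N}: a₊ ∈ H∞⁺, a₋ ∈ H∞⁻, b₊ = e_{β/(N-1)} a₋ ∈ H∞⁺, b₋ = e_{-ν/(N-1)} a₊ ∈ H∞⁻, ν + β = λ/N, φ₁₊ = e_{λ-ν} ∑_{j=0}^{N-1} (-1)^j a₊^{N-1-j} a₋^j e_{-jλ/N}, φ₂₊ = -a₊^N. Then for any horizontal strip S = {ξ ∈ ℂ : -ε₂ < Im ξ < ε₁} (ε₁, ε₂ ≥ 0), one has inf_S (|φ₁₊| +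 |φ₂₊|) > 0 if and only if inf_S (|a₊| + |a₋|) > 0. -/
noncomputable section
open Complex MeasureTheory Filter Topology
open scoped ENNReal

lemma abs_eFun (mu : ℝ) (z : ℂ) : ‖eFun mu z‖ = Real.exp (-(mu * z.im)) := by
  rw [eFun, Complex.norm_exp]
  congr 1
  simp [Complex.mul_re, Complex.mul_im]

lemma exp_strip {B R mu : ℝ} {z : ℂ} (hmu : |mu| ≤ B) (h : |z.im| ≤ R) :
    Real.exp (-(B * R)) ≤ ‖eFun mu z‖ ∧
      ‖eFun mu z‖ ≤ Real.exp (B * R) := by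
  rw [abs_eFun]
  have h1 : |mu * z.im| ≤ B * R := by
    rw [abs_mul]
    exact mul_le_mul hmu h (abs_nonneg _) ((abs_nonneg mu).trans hmu)
  constructor <;> apply Real.exp_le_exp.mpr
  · have := le_abs_self (mu * z.im); linarith
  · have := neg_abs_le (mu * z.im); linarith

lemma abs_add_lower (x y : ℂ) : ‖y‖ - ‖x‖ ≤ ‖x + y‖ := by
  have h := norm_sub_norm_le y (-x)
  simp only [norm_neg, sub_neg_eq_add] at h
  rw [add_comm x y]
  simpa using h

lemma abs_term_eq (ap am : ℂ → ℂ) (z : ℂ) (p j : ℕ) (mu : ℝ) :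
    ‖(-1 : ℂ) ^ j * ap z ^ p * am z ^ j * eFun mu z‖ =
      ‖ap z‖ ^ p * ‖am z‖ ^ j * ‖eFun mu z‖ := by
  simp [norm_mul, norm_pow]

set_option maxHeartbeats 1000000 in
/-- Lemma 4.4: in any horizontal strip `S = {-ε₂ < Im ξ < ε₁}`, the infimum of
`|φ₁₊| + |φ₂₊|` is positive iff the infimum of `|a₊| + |a₋|` is. -/
theorem stmt12 (lam nu beta : ℝ) (N : ℕ) (hN : 1 < N) (hlam : 0 < lam)
    (hnu : 0 ≤ nu) (hbeta : 0 ≤ beta) (hsum : nu + beta = lam / N)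
    (ap am : ℂ → ℂ) (hap : HInfPlus ap) (ham : HInfMinus am)
    (hbp : HInfPlus fun z => eFun (beta / ((N : ℝ) - 1)) z * am z)
    (hbm : HInfMinus fun z => eFun (-(nu / ((N : ℝ) - 1))) z * ap z)
    (φ1p φ2p : ℂ → ℂ)
    (hφ1p : ∀ z, φ1p z = eFun (lam - nu) z *
      ∑ j ∈ Finset.range N,
        (-1 : ℂ) ^ j * ap z ^ (N - 1 - j) * am z ^ j * eFun (-((j : ℝ) * lam / N)) z)
    (hφ2p : ∀ z, φ2p z = -(ap z ^ N))
    (ε1 ε2 : ℝ) (hε1 : 0 ≤ ε1) (hε2 : 0 ≤ ε2) :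
    (∃ c : ℝ, 0 < c ∧ ∀ z : ℂ, -ε2 < z.im → z.im < ε1 →
        c ≤ ‖φ1p z‖ + ‖φ2p z‖) ↔
    (∃ c : ℝ, 0 < c ∧ ∀ z : ℂ, -ε2 < z.im → z.im < ε1 →
        c ≤ ‖ap z‖ + ‖am z‖) := by
  obtain ⟨K, rfl⟩ : ∃ K, N = K + 1 := ⟨N - 1, by omega⟩
  have hK : 1 ≤ K := by omega
  set R : ℝ := max ε1 ε2 with hRdef
  have hR0 : 0 ≤ R := le_trans hε1 (le_max_left _ _)
  have hstrip : ∀ z : ℂ, -ε2 < z.im → z.im < ε1 → |z.im| ≤ R := by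
    intro z h1 h2
    rw [abs_le]
    constructor
    · have := le_max_right ε1 ε2; linarith
    · have := le_max_left ε1 ε2; linarith
  have hE1p : (0:ℝ) < Real.exp (-(|lam - nu| * R)) := Real.exp_pos _
  have hE1'p : (0:ℝ) < Real.exp (|lam - nu| * R) := Real.exp_pos _
  have hE2p : (0:ℝ) < Real.exp (-(|lam| * R)) := Real.exp_pos _
  have hE3p : (0:ℝ) < Real.exp (|lam| * R) := Real.exp_pos _
  have hmuj : ∀ j : ℕ, j ≤ K → |(-((j : ℝ) * lam / ((K + 1 : ℕ) : ℝ)))| ≤ |lam| := by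
    intro j hj
    rw [abs_neg, abs_div, abs_mul]
    rw [_root_.abs_of_nonneg (by positivity : (0:ℝ) ≤ (((K + 1 : ℕ) : ℝ)))]
    rw [_root_.abs_of_nonneg (Nat.cast_nonneg j)]
    rw [div_le_iff₀ (by positivity)]
    have hj' : (j : ℝ) ≤ ((K + 1 : ℕ) : ℝ) := by exact_mod_cast Nat.le_succ_of_le hj
    nlinarith [abs_nonneg lam, Nat.cast_nonneg (α := ℝ) j]
  constructor
  · rintro ⟨c, hc, H⟩
    set C : ℝ := ((K:ℝ) + 1) * Real.exp (|lam - nu| * R) * Real.exp (|lam| * R) + 1 with hC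
    have hCpos : 0 < C := by positivity
    refine ⟨min (c / C) 1, lt_min (by positivity) one_pos, ?_⟩
    intro z h1 h2
    by_contra hlt
    push_neg at hlt
    have hZR := hstrip z h1 h2
    set m := ‖ap z‖ with hm
    set a := ‖am z‖ with ha
    have hm0 : 0 ≤ m := norm_nonneg _
    have ha0 : 0 ≤ a := norm_nonneg _
    have hma1 : m + a < 1 := lt_of_lt_of_le hlt (min_le_right _ _)
    have hmaC : m + a < c / C := lt_of_lt_of_le hlt (min_le_left _ _)
    have hm1 : m ≤ 1 := by linarith
    have ha1 : a ≤ 1 := by linarith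
    have hterm : ∀ j ∈ Finset.range (K + 1),
        ‖(-1 : ℂ) ^ j * ap z ^ (K + 1 - 1 - j) * am z ^ j *
          eFun (-((j : ℝ) * lam / ((K + 1 : ℕ) : ℝ))) z‖ ≤ (m + a) * Real.exp (|lam| * R) := by
      intro j hj
      rw [abs_term_eq]
      have hjK : j ≤ K := by simpa [Nat.lt_succ_iff] using Finset.mem_range.mp hj
      have hexp := (exp_strip (hmuj j hjK) hZR).2
      have hmono : m ^ (K + 1 - 1 - j) * a ^ j ≤ m + a := by
        rcases eq_or_lt_of_le hjK with heq | hlt'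
        · have h0 : K + 1 - 1 - j = 0 := by omega
          rw [h0, pow_zero, one_mul]
          have : a ^ j ≤ a := pow_le_of_le_one ha0 ha1 (by omega)
          linarith
        · have h1' : m ^ (K + 1 - 1 - j) ≤ m := pow_le_of_le_one hm0 hm1 (by omega)
          have h2' : a ^ j ≤ 1 := pow_le_one₀ ha0 ha1
          have h3' : 0 ≤ m ^ (K + 1 - 1 - j) := pow_nonneg hm0 _
          nlinarith
      have h4' : 0 ≤ m ^ (K + 1 - 1 - j) * a ^ j := by positivity
      calc m ^ (K + 1 - 1 - j) * a ^ j * ‖eFun (-((j : ℝ) * lam / ((K + 1 : ℕ) : ℝ))) z‖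
          ≤ m ^ (K + 1 - 1 - j) * a ^ j * Real.exp (|lam| * R) :=
            mul_le_mul_of_nonneg_left hexp h4'
        _ ≤ (m + a) * Real.exp (|lam| * R) := mul_le_mul_of_nonneg_right hmono hE3p.le
    have hsumle : ‖∑ j ∈ Finset.range (K + 1),
        (-1 : ℂ) ^ j * ap z ^ (K + 1 - 1 - j) * am z ^ j *
          eFun (-((j : ℝ) * lam / ((K + 1 : ℕ) : ℝ))) z‖ ≤
        ((K:ℝ) + 1) * ((m + a) * Real.exp (|lam| * R)) := by
      calc ‖∑ j ∈ Finset.range (K + 1), _‖ ≤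
          ∑ j ∈ Finset.range (K + 1), ‖(-1 : ℂ) ^ j * ap z ^ (K + 1 - 1 - j) *
            am z ^ j * eFun (-((j : ℝ) * lam / ((K + 1 : ℕ) : ℝ))) z‖ :=
            norm_sum_le _ _
        _ ≤ ∑ _j ∈ Finset.range (K + 1), (m + a) * Real.exp (|lam| * R) :=
            Finset.sum_le_sum hterm
        _ = ((K:ℝ) + 1) * ((m + a) * Real.exp (|lam| * R)) := by
            rw [Finset.sum_const, Finset.card_range]; push_cast; ring
    have hφ1 : ‖φ1p z‖ ≤
        Real.exp (|lam - nu| * R) * (((K:ℝ) + 1) * ((m + a) * Real.exp (|lam| * R))) := by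
      rw [hφ1p z, norm_mul]
      have he := (exp_strip (le_refl |lam - nu|) hZR).2
      exact mul_le_mul he hsumle (norm_nonneg _) hE1'p.le
    have hφ2 : ‖φ2p z‖ ≤ m + a := by
      rw [hφ2p z, norm_neg, norm_pow]
      have : m ^ (K + 1) ≤ m := pow_le_of_le_one hm0 hm1 (by omega)
      linarith
    have hcle := H z h1 h2
    have hfin : c ≤ C * (m + a) := by
      have : Real.exp (|lam - nu| * R) * (((K:ℝ) + 1) * ((m + a) * Real.exp (|lam| * R))) + (m + a)
          = C * (m + a) := by rw [hC]; ring
      linarith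
    have hlt2 : C * (m + a) < C * (c / C) := mul_lt_mul_of_pos_left hmaC hCpos
    rw [mul_div_cancel₀ _ hCpos.ne'] at hlt2
    linarith
  · rintro ⟨c, hc, H⟩
    have hKpos : (0:ℝ) < (K:ℝ) := by exact_mod_cast hK
    set δ : ℝ := min (c / 2)
      (c * Real.exp (-(|lam| * R)) / (4 * (K:ℝ) * Real.exp (|lam| * R))) with hδdef
    have hδpos : 0 < δ := lt_min (by positivity) (by positivity)
    have hδc2 : δ ≤ c / 2 := min_le_left _ _
    have hδE : δ ≤ c * Real.exp (-(|lam| * R)) / (4 * (K:ℝ) * Real.exp (|lam| * R)) :=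
      min_le_right _ _
    refine ⟨min (δ ^ (K + 1))
      (Real.exp (-(|lam - nu| * R)) * ((c / 2) ^ K * Real.exp (-(|lam| * R)) / 2)),
      lt_min (by positivity) (by positivity), ?_⟩
    intro z h1 h2
    have hZR := hstrip z h1 h2
    set m := ‖ap z‖ with hm
    set a := ‖am z‖ with ha
    have hm0 : 0 ≤ m := norm_nonneg _
    have ha0 : 0 ≤ a := norm_nonneg _
    have hca := H z h1 h2
    have habsφ2 : ‖φ2p z‖ = m ^ (K + 1) := by
      rw [hφ2p z, norm_neg, norm_pow]
    have hφ1nn : 0 ≤ ‖φ1p z‖ := norm_nonneg _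
    rcases le_or_gt δ m with hmδ | hmδ
    · have hp : δ ^ (K + 1) ≤ m ^ (K + 1) := pow_le_pow_left₀ hδpos.le hmδ _
      calc min _ _ ≤ δ ^ (K + 1) := min_le_left _ _
        _ ≤ m ^ (K + 1) := hp
        _ ≤ ‖φ1p z‖ + ‖φ2p z‖ := by rw [habsφ2] at *; linarith
    · have hma : c / 2 ≤ a := by linarith
      have hmlea : m ≤ a := by linarith
      -- bound the tail sum
      have hTle : ‖∑ j ∈ Finset.range K,
          (-1 : ℂ) ^ j * ap z ^ (K + 1 - 1 - j) * am z ^ j *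
            eFun (-((j : ℝ) * lam / ((K + 1 : ℕ) : ℝ))) z‖ ≤
          (K:ℝ) * (δ * a ^ (K - 1) * Real.exp (|lam| * R)) := by
        calc ‖∑ j ∈ Finset.range K, _‖ ≤
            ∑ j ∈ Finset.range K, ‖(-1 : ℂ) ^ j * ap z ^ (K + 1 - 1 - j) *
              am z ^ j * eFun (-((j : ℝ) * lam / ((K + 1 : ℕ) : ℝ))) z‖ :=
              norm_sum_le _ _
          _ ≤ ∑ _j ∈ Finset.range K, δ * a ^ (K - 1) * Real.exp (|lam| * R) := by
              apply Finset.sum_le_sum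
              intro j hj
              have hjK : j < K := Finset.mem_range.mp hj
              rw [abs_term_eq]
              have hexp := (exp_strip (hmuj j hjK.le) hZR).2
              have hmono : m ^ (K + 1 - 1 - j) * a ^ j ≤ δ * a ^ (K - 1) := by
                have he1 : K + 1 - 1 - j = (K - 1 - j) + 1 := by omega
                rw [he1, pow_succ]
                have h2' : m ^ (K - 1 - j) ≤ a ^ (K - 1 - j) := pow_le_pow_left₀ hm0 hmlea _
                have h3' : a ^ (K - 1 - j) * a ^ j = a ^ (K - 1) := by
                  rw [← pow_add]; congr 1; omega
                calc m ^ (K - 1 - j) * m * a ^ j ≤ a ^ (K - 1 - j) * δ * a ^ j := by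
                      apply mul_le_mul_of_nonneg_right _ (pow_nonneg ha0 j)
                      exact mul_le_mul h2' hmδ.le hm0 (pow_nonneg ha0 _)
                  _ = δ * a ^ (K - 1) := by rw [mul_comm (a ^ (K - 1 - j)) δ, mul_assoc, h3']
              have h4' : 0 ≤ m ^ (K + 1 - 1 - j) * a ^ j := by positivity
              calc m ^ (K + 1 - 1 - j) * a ^ j *
                    ‖eFun (-((j : ℝ) * lam / ((K + 1 : ℕ) : ℝ))) z‖
                  ≤ m ^ (K + 1 - 1 - j) * a ^ j * Real.exp (|lam| * R) :=
                    mul_le_mul_of_nonneg_left hexp h4'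
                _ ≤ δ * a ^ (K - 1) * Real.exp (|lam| * R) :=
                    mul_le_mul_of_nonneg_right hmono hE3p.le
          _ = (K:ℝ) * (δ * a ^ (K - 1) * Real.exp (|lam| * R)) := by
              rw [Finset.sum_const, Finset.card_range]; push_cast; ring
      -- lower bound for the last term
      have hLge : a ^ K * Real.exp (-(|lam| * R)) ≤
          ‖(-1 : ℂ) ^ K * ap z ^ (K + 1 - 1 - K) * am z ^ K *
            eFun (-((K : ℝ) * lam / ((K + 1 : ℕ) : ℝ))) z‖ := by
        rw [abs_term_eq]
        have h0 : K + 1 - 1 - K = 0 := by omega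
        rw [h0, pow_zero, one_mul]
        have hexp := (exp_strip (hmuj K le_rfl) hZR).1
        exact mul_le_mul_of_nonneg_left hexp (pow_nonneg ha0 _)
      -- key product inequality
      have hKdE : (K:ℝ) * δ * Real.exp (|lam| * R) ≤ c * Real.exp (-(|lam| * R)) / 4 := by
        have h1' : (K:ℝ) * δ * Real.exp (|lam| * R) ≤
            (K:ℝ) * (c * Real.exp (-(|lam| * R)) / (4 * (K:ℝ) * Real.exp (|lam| * R))) *
              Real.exp (|lam| * R) := by
          apply mul_le_mul_of_nonneg_right _ hE3p.le
          exact mul_le_mul_of_nonneg_left hδE hKpos.le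
        have h2' : (K:ℝ) * (c * Real.exp (-(|lam| * R)) / (4 * (K:ℝ) * Real.exp (|lam| * R))) *
            Real.exp (|lam| * R) = c * Real.exp (-(|lam| * R)) / 4 := by
          field_simp
        linarith
      have haK : a ^ K = a ^ (K - 1) * a := by
        rw [← pow_succ]; congr 1; omega
      have haK1 : 0 ≤ a ^ (K - 1) := pow_nonneg ha0 _
      have hXa : (c / 2) ^ K * Real.exp (-(|lam| * R)) / 2 ≤
          a ^ K * Real.exp (-(|lam| * R)) -
            (K:ℝ) * (δ * a ^ (K - 1) * Real.exp (|lam| * R)) := by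
        have hpow : (c / 2) ^ K ≤ a ^ K := pow_le_pow_left₀ (by positivity) hma _
        have h2' : a ^ (K - 1) * ((K:ℝ) * δ * Real.exp (|lam| * R)) ≤
            a ^ (K - 1) * (c * Real.exp (-(|lam| * R)) / 4) :=
          mul_le_mul_of_nonneg_left hKdE haK1
        have h3' : a ^ (K - 1) * (c * Real.exp (-(|lam| * R)) / 4) ≤
            a ^ (K - 1) * (a * Real.exp (-(|lam| * R)) / 2) := by
          apply mul_le_mul_of_nonneg_left _ haK1
          have h5' := mul_le_mul_of_nonneg_right hma
            (by positivity : (0:ℝ) ≤ Real.exp (-(|lam| * R)) / 2)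
          linarith
        have h4' : (K:ℝ) * (δ * a ^ (K - 1) * Real.exp (|lam| * R)) =
            a ^ (K - 1) * ((K:ℝ) * δ * Real.exp (|lam| * R)) := by ring
        have hpow' : (c / 2) ^ K * Real.exp (-(|lam| * R)) ≤
            (a ^ (K - 1) * a) * Real.exp (-(|lam| * R)) := by
          rw [← haK]; exact mul_le_mul_of_nonneg_right hpow hE2p.le
        rw [haK, h4']
        linarith [h2', h3', hpow']
      -- assemble
      rw [hφ1p z, Finset.sum_range_succ, norm_mul]
      have hlow := abs_add_lower
        (∑ j ∈ Finset.range K, (-1 : ℂ) ^ j * ap z ^ (K + 1 - 1 - j) * am z ^ j *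
          eFun (-((j : ℝ) * lam / ((K + 1 : ℕ) : ℝ))) z)
        ((-1 : ℂ) ^ K * ap z ^ (K + 1 - 1 - K) * am z ^ K *
          eFun (-((K : ℝ) * lam / ((K + 1 : ℕ) : ℝ))) z)
      have hsumlb : (c / 2) ^ K * Real.exp (-(|lam| * R)) / 2 ≤
          ‖∑ j ∈ Finset.range K, (-1 : ℂ) ^ j * ap z ^ (K + 1 - 1 - j) * am z ^ j *
            eFun (-((j : ℝ) * lam / ((K + 1 : ℕ) : ℝ))) z +
            (-1 : ℂ) ^ K * ap z ^ (K + 1 - 1 - K) * am z ^ K *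
            eFun (-((K : ℝ) * lam / ((K + 1 : ℕ) : ℝ))) z‖ := by
        linarith
      have he1 := (exp_strip (le_refl |lam - nu|) hZR).1
      have habs2 : 0 ≤ ‖φ2p z‖ := norm_nonneg _
      calc min (δ ^ (K + 1))
            (Real.exp (-(|lam - nu| * R)) * ((c / 2) ^ K * Real.exp (-(|lam| * R)) / 2)) ≤
            Real.exp (-(|lam - nu| * R)) * ((c / 2) ^ K * Real.exp (-(|lam| * R)) / 2) :=
          min_le_right _ _
        _ ≤ Real.exp (-(|lam - nu| * R)) * ‖∑ j ∈ Finset.range K,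
              (-1 : ℂ) ^ j * ap z ^ (K + 1 - 1 - j) * am z ^ j *
                eFun (-((j : ℝ) * lam / ((K + 1 : ℕ) : ℝ))) z +
              (-1 : ℂ) ^ K * ap z ^ (K + 1 - 1 - K) * am z ^ K *
                eFun (-((K : ℝ) * lam / ((K + 1 : ℕ) : ℝ))) z‖ :=
          mul_le_mul_of_nonneg_left hsumlb hE1p.le
        _ ≤ ‖eFun (lam - nu) z‖ * ‖∑ j ∈ Finset.range K,
              (-1 : ℂ) ^ j * ap z ^ (K + 1 - 1 - j) * am z ^ j *
                eFun (-((j : ℝ) * lam / ((K + 1 : ℕ) : ℝ))) z +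
              (-1 : ℂ) ^ K * ap z ^ (K + 1 - 1 - K) * am z ^ K *
                eFun (-((K : ℝ) * lam / ((K + 1 : ℕ) : ℝ))) z‖ :=
          mul_le_mul_of_nonneg_right he1 (norm_nonneg _)
        _ ≤ _ := by linarith
end
end
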